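/- For a qubit with initial state ρ_O = q|φ_1⟩⟨φ_1| + (1−q)|φ_2⟩⟨φ_2|, q ∈ (1/2, 1), fully erased using a continuous-spectrum infinite reservoir at inverse temperature β, the optimal heat dissipation ΔQ = 2q(1−q)log(q/(1−q)) / (β(2q−1)) strictly exceeds ΔS/β, where ΔS = −q log q − (1−q) log(1−q) is the entropy reduction; i.e. β·ΔQ − ΔS > 0 for all q ∈ (1/2, 1). -/

import Mathlib

open Real

noncomputable def gAux (x : ℝ) : ℝ := x * Real.log x - (1 - x) * Real.log (1 - x)

lemma hasDerivAt_gAux {x : ℝ} (hx0 : x ≠ 0) (hx1 : x ≠ 1) :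
    HasDerivAt gAux (Real.log x + Real.log (1 - x) + 2) x := by
  have h1 : HasDerivAt (fun y : ℝ => y * Real.log y) (Real.log x + 1) x :=
    Real.hasDerivAt_mul_log hx0
  have hinner : HasDerivAt (fun y : ℝ => 1 - y) (-1) x := by
    simpa using (hasDerivAt_id x).const_sub 1
  have h2 : HasDerivAt (fun y : ℝ => (1 - y) * Real.log (1 - y))
      ((Real.log (1 - x) + 1) * (-1)) x := by
    have hne : (1 : ℝ) - x ≠ 0 := by intro h; apply hx1; linarith
    exact (Real.hasDerivAt_mul_log hne).comp x hinner
  have : HasDerivAt (fun y : ℝ => y * Real.log y - (1 - y) * Real.log (1 - y))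
      (Real.log x + 1 - (Real.log (1 - x) + 1) * (-1)) x := h1.sub h2
  unfold gAux
  convert this using 1
  ring

lemma gAux_concave : StrictConcaveOn ℝ (Set.Icc (1/2 : ℝ) 1) gAux := by
  apply strictConcaveOn_of_deriv2_neg (convex_Icc _ _)
  · apply ContinuousOn.sub
    · exact Real.continuous_mul_log.continuousOn
    · exact (Real.continuous_mul_log.comp (continuous_const.sub continuous_id)).continuousOn
  · intro x hx
    rw [interior_Icc] at hx
    obtain ⟨hx1, hx2⟩ := hx
    have hx0 : (0 : ℝ) < x := by linarith
    have h1x : (0 : ℝ) < 1 - x := by linarith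
    have hEq : deriv gAux =ᶠ[nhds x]
        fun y => Real.log y + Real.log (1 - y) + 2 := by
      filter_upwards [isOpen_Ioo.mem_nhds (show x ∈ Set.Ioo (0 : ℝ) 1 by
        constructor <;> linarith)] with y hy
      exact (hasDerivAt_gAux (ne_of_gt hy.1) (ne_of_lt hy.2)).deriv
    have hD2 : HasDerivAt (fun y => Real.log y + Real.log (1 - y) + 2)
        (1 / x + (1 / (1 - x)) * (-1)) x := by
      have hinner : HasDerivAt (fun y : ℝ => 1 - y) (-1) x := by
        simpa using (hasDerivAt_id x).const_sub 1
      have hlog1 : HasDerivAt Real.log (1 / x) x := by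
        simpa [one_div] using Real.hasDerivAt_log (ne_of_gt hx0)
      have hlog2 : HasDerivAt (fun y : ℝ => Real.log (1 - y)) ((1 / (1 - x)) * (-1)) x := by
        have := (Real.hasDerivAt_log (ne_of_gt h1x)).comp x hinner
        simpa [one_div, Function.comp_def] using this
      simpa using (hlog1.add hlog2).add_const 2
    have : deriv (deriv gAux) x = 1 / x + (1 / (1 - x)) * (-1) := by
      rw [hEq.deriv_eq]
      exact hD2.deriv
    have hlt : 1 / x < 1 / (1 - x) := by
      apply one_div_lt_one_div_of_lt h1x
      linarith
    simp only [Function.iterate_succ, Function.iterate_zero, Function.comp_apply, id_eq]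
    rw [this]
    linarith

lemma gAux_pos {q : ℝ} (hq1 : 1/2 < q) (hq2 : q < 1) : 0 < gAux q := by
  have h12 : (1/2 : ℝ) ∈ Set.Icc (1/2 : ℝ) 1 := by norm_num
  have h1 : (1 : ℝ) ∈ Set.Icc (1/2 : ℝ) 1 := by norm_num
  have ha : (0 : ℝ) < 2 * (1 - q) := by linarith
  have hb : (0 : ℝ) < 2 * q - 1 := by linarith
  have hab : 2 * (1 - q) + (2 * q - 1) = 1 := by ring
  have := gAux_concave.2 h12 h1 (by norm_num) ha hb hab
  have hval : gAux (1/2) = 0 := by norm_num [gAux]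
  have hval1 : gAux 1 = 0 := by unfold gAux; simp
  rw [hval, hval1] at this
  have hq : (2 * (1 - q)) • (1/2 : ℝ) + (2 * q - 1) • (1 : ℝ) = q := by
    simp [smul_eq_mul]; ring
  rw [hq] at this
  simpa using this

/-- **Landauer's limit is strictly exceeded for biased-qubit erasure**: for
`q ∈ (1/2, 1)`, the optimal heat `β·ΔQ = 2q(1−q)log(q/(1−q))/(2q−1)` strictly
exceeds the entropy reduction `ΔS = −q log q − (1−q)log(1−q)`; equivalently
with `ΔQ = 2q(1−q)log(q/(1−q))/(β(2q−1))` one has `β·ΔQ − ΔS > 0`. -/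
theorem biased_qubit_exceeds_landauer (q : ℝ) (hq1 : 1/2 < q) (hq2 : q < 1) :
    -(q * Real.log q) - (1 - q) * Real.log (1 - q)
      < 2 * q * (1 - q) * Real.log (q / (1 - q)) / (2 * q - 1) := by
  have hq0 : (0 : ℝ) < q := by linarith
  have h1q : (0 : ℝ) < 1 - q := by linarith
  have hden : (0 : ℝ) < 2 * q - 1 := by linarith
  have hlog : Real.log (q / (1 - q)) = Real.log q - Real.log (1 - q) :=
    Real.log_div (ne_of_gt hq0) (ne_of_gt h1q)
  have hg : 0 < q * Real.log q - (1 - q) * Real.log (1 - q) := gAux_pos hq1 hq2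
  rw [hlog, lt_div_iff₀ hden]
  nlinarith [hg]
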